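/- arXiv:1608.01259 — 4 statements merged into one kernel-verified Lean document; each statement's English description precedes it below -/
import Mathlib

section
/- If u_j : D → [-∞, +∞), j = 1, 2, …, are K-quasinearly subharmonic n.s. on a domain D ⊆ ℝ^N, N ≥ 2, and u_j decreases pointwise to u as j → +∞, then u is K-quasinearly subharmonic n.s. -/
open MeasureTheory Metric
open scoped ENNReal

noncomputable section

/-- `ℝ^N` as Euclidean space. -/
abbrev Euc (N : ℕ) := EuclideanSpace ℝ (Fin N)

/-- `ν_N`: the volume of the unit ball in `ℝ^N`. -/
noncomputable def unitBallVol (N : ℕ) : ℝ := (volume (ball (0 : Euc N) 1)).toReal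

/-- Positive part of an extended real, valued in `ℝ≥0∞`. -/
noncomputable def epos (x : EReal) : ℝ≥0∞ := if x = ⊤ then ⊤ else ENNReal.ofReal x.toReal

/-- The extended-real valued Lebesgue integral of `u` over `s`
(well defined whenever the positive part is integrable). -/
noncomputable def esetInt {N : ℕ} (u : Euc N → EReal) (s : Set (Euc N)) : EReal :=
  ((∫⁻ y in s, epos (u y)) : ℝ≥0∞) - ((∫⁻ y in s, epos (-(u y))) : ℝ≥0∞)

/-- The generalized sub-mean-value inequality
`u(x) ≤ K/(ν_N r^N) ∫_{B(x,r)} u dm_N` over all closed balls contained in `D`. -/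
def SubMeanIneq {N : ℕ} (K : ℝ) (D : Set (Euc N)) (u : Euc N → EReal) : Prop :=
  ∀ x r, 0 < r → closedBall x r ⊆ D →
    u x ≤ ((K / (unitBallVol N * r ^ N) : ℝ) : EReal) * esetInt u (ball x r)

/-- `u` is `K`-quasinearly subharmonic n.s. (in the narrow sense) on `D`:
`u` is measurable, `u⁺ ∈ L¹_loc(D)`, `u < +∞` and the sub-mean-value
inequality with constant `K` holds on all closed balls in `D`. -/
def QNSns {N : ℕ} (K : ℝ) (D : Set (Euc N)) (u : Euc N → EReal) : Prop :=
  1 ≤ K ∧ AEMeasurable u (volume.restrict D) ∧ (∀ x ∈ D, u x < ⊤) ∧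
  LocallyIntegrableOn (fun y => ((u y) ⊔ 0).toReal) D volume ∧
  SubMeanIneq K D u

/-- The family of inequalities (for every `M ≥ 0`, applied to `u_M = max (u, -M) + M`)
defining `K`-quasinearly subharmonic functions. -/
def QNSIneqFull {N : ℕ} (K : ℝ) (D : Set (Euc N)) (u : Euc N → EReal) : Prop :=
  ∀ M : ℝ, 0 ≤ M → ∀ x r, 0 < r → closedBall x r ⊆ D →
    (u x ⊔ ((-M : ℝ) : EReal)) + (M : EReal) ≤
      ((K / (unitBallVol N * r ^ N) : ℝ) : EReal) *
        ((∫⁻ y in ball x r, epos ((u y ⊔ ((-M : ℝ) : EReal)) + (M : EReal))) : ℝ≥0∞)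

/-- `u` is `K`-quasinearly subharmonic on `D`. -/
def QNSfull {N : ℕ} (K : ℝ) (D : Set (Euc N)) (u : Euc N → EReal) : Prop :=
  1 ≤ K ∧ AEMeasurable u (volume.restrict D) ∧ (∀ x ∈ D, u x < ⊤) ∧
  LocallyIntegrableOn (fun y => ((u y) ⊔ 0).toReal) D volume ∧
  QNSIneqFull K D u

/-- `u ∈ L¹_loc(D)` for an extended-real valued `u`. -/
def LocIntE {N : ℕ} (u : Euc N → EReal) (D : Set (Euc N)) : Prop :=
  ∀ k, k ⊆ D → IsCompact k → (∫⁻ y in k, epos (u y) + epos (-(u y))) < ⊤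

/-- The sub-mean-value inequality for real-valued functions. -/
def SubMeanIneqR {N : ℕ} (K : ℝ) (D : Set (Euc N)) (u : Euc N → ℝ) : Prop :=
  ∀ x r, 0 < r → closedBall x r ⊆ D →
    u x ≤ (K / (unitBallVol N * r ^ N)) * ∫ y in ball x r, u y

/-- The quasinearly subharmonicity inequalities (for every `M ≥ 0`,
applied to `u_M = max (u, -M) + M`) for real-valued functions. -/
def QNSIneqFullR {N : ℕ} (K : ℝ) (D : Set (Euc N)) (u : Euc N → ℝ) : Prop :=
  ∀ M : ℝ, 0 ≤ M → ∀ x r, 0 < r → closedBall x r ⊆ D →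
    max (u x) (-M) + M ≤
      (K / (unitBallVol N * r ^ N)) * ∫ y in ball x r, (max (u y) (-M) + M)

/-- `u : D → [-∞, +∞)` is harmonic on `D`: it is finite (real-valued) on `D`,
continuous on `D`, and satisfies the mean value equality on all closed balls in `D`. -/
def IsHarmonicOn {N : ℕ} (D : Set (Euc N)) (u : Euc N → EReal) : Prop :=
  (∀ x ∈ D, u x ≠ ⊥ ∧ u x ≠ ⊤) ∧ ContinuousOn (fun x => (u x).toReal) D ∧
  ∀ x r, 0 < r → closedBall x r ⊆ D →
    (u x).toReal = (1 / (unitBallVol N * r ^ N)) * ∫ y in ball x r, (u y).toReal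

end

section AuxLemmas

open scoped ENNReal

lemma aux_epos_mono : Monotone epos := by
  intro a b hab
  by_cases hb : b = ⊤
  · simp [epos, hb]
  · have ha : a ≠ ⊤ := fun h => hb (top_le_iff.mp (h ▸ hab))
    simp only [epos, if_neg ha, if_neg hb]
    rcases eq_or_ne a ⊥ with hba | hba
    · simp [hba]
    · exact ENNReal.ofReal_le_ofReal (EReal.toReal_le_toReal hab hba hb)

lemma aux_measurable_epos : Measurable epos := by
  unfold epos
  exact Measurable.ite (measurableSet_eq)
    measurable_const (ENNReal.measurable_ofReal.comp measurable_ereal_toReal)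

lemma aux_epos_le_ofReal {a : EReal} {t : ℝ} (h : a ≤ (t : EReal)) :
    epos a ≤ ENNReal.ofReal t := by
  have ha : a ≠ ⊤ := fun hc => by simp [hc] at h
  rw [epos, if_neg ha]
  rcases eq_or_ne a ⊥ with hb | hb
  · simp [hb]
  · exact ENNReal.ofReal_le_ofReal
      (by simpa using EReal.toReal_le_toReal h hb (EReal.coe_ne_top t))

lemma aux_ofReal_le_epos {a : EReal} {t : ℝ} (h : (t : EReal) ≤ a) :
    ENNReal.ofReal t ≤ epos a := by
  rcases eq_or_ne a ⊤ with ha | ha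
  · simp [epos, ha]
  · have hb : a ≠ ⊥ := fun hc => by simp [hc] at h
    rw [epos, if_neg ha]
    exact ENNReal.ofReal_le_ofReal
      (by simpa using EReal.toReal_le_toReal h (EReal.coe_ne_bot t) ha)

lemma aux_epos_iInf (a : ℕ → EReal) : ⨅ j, epos (a j) = epos (⨅ j, a j) := by
  refine le_antisymm ?_ (le_iInf fun j => aux_epos_mono (iInf_le a j))
  set x := ⨅ j, a j with hx
  rcases eq_or_ne x ⊤ with h | h
  · have hall : ∀ j, a j = ⊤ := fun j => top_le_iff.mp (h ▸ iInf_le a j)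
    simp [epos, hall, h]
  · rw [epos, if_neg h]
    refine ENNReal.le_of_forall_pos_le_add fun ε hε _ => ?_
    have hεR : (0:ℝ) < (ε:ℝ) := hε
    have hlt : x < ((x.toReal + ε : ℝ) : EReal) := by
      rcases eq_or_ne x ⊥ with hb | hb
      · rw [hb]; exact bot_lt_iff_ne_bot.mpr (EReal.coe_ne_bot _)
      · calc x = ((x.toReal : ℝ) : EReal) := (EReal.coe_toReal h hb).symm
          _ < ((x.toReal + ε : ℝ) : EReal) := by
              exact_mod_cast lt_add_of_pos_right x.toReal hεR
    obtain ⟨j, hj⟩ := iInf_lt_iff.mp hlt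
    calc (⨅ i, epos (a i)) ≤ epos (a j) := iInf_le _ j
      _ ≤ ENNReal.ofReal (x.toReal + ε) := aux_epos_le_ofReal hj.le
      _ ≤ ENNReal.ofReal x.toReal + ENNReal.ofReal ε := ENNReal.ofReal_add_le
      _ = ENNReal.ofReal x.toReal + ε := by rw [ENNReal.ofReal_coe_nnreal]

lemma aux_epos_iSup (a : ℕ → EReal) : ⨆ j, epos (a j) = epos (⨆ j, a j) := by
  refine le_antisymm (iSup_le fun j => aux_epos_mono (le_iSup a j)) ?_
  set s := ⨆ j, a j with hs
  rcases eq_or_ne s ⊤ with h | h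
  · rw [h]
    simp only [epos, if_pos rfl]
    by_contra hc
    push_neg at hc
    set c := ⨆ j, epos (a j) with hcdef
    have hc' : c ≠ ⊤ := hc.ne
    have h1 : ((c.toReal + 1 : ℝ) : EReal) < s := h ▸ EReal.coe_lt_top _
    obtain ⟨j, hj⟩ := lt_iSup_iff.mp h1
    have h2 : ENNReal.ofReal (c.toReal + 1) ≤ c := by
      rw [hcdef]
      exact (aux_ofReal_le_epos hj.le).trans (le_iSup (fun i => epos (a i)) j)
    have h3 : c < ENNReal.ofReal (c.toReal + 1) :=
      (ENNReal.lt_ofReal_iff_toReal_lt hc').mpr (by linarith)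
    exact absurd h2 h3.not_ge
  · rw [epos, if_neg h]
    rcases eq_or_ne s ⊥ with hb | hb
    · simp [hb]
    · refine ENNReal.le_of_forall_pos_le_add fun ε hε _ => ?_
      have hεR : (0:ℝ) < (ε:ℝ) := hε
      have hlt : ((s.toReal - ε : ℝ) : EReal) < s := by
        calc ((s.toReal - ε : ℝ) : EReal) < ((s.toReal : ℝ) : EReal) := by
              exact_mod_cast sub_lt_self s.toReal hεR
          _ = s := EReal.coe_toReal h hb
      obtain ⟨j, hj⟩ := lt_iSup_iff.mp hlt
      calc ENNReal.ofReal s.toReal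
          = ENNReal.ofReal ((s.toReal - ε) + ε) := by ring_nf
        _ ≤ ENNReal.ofReal (s.toReal - ε) + ENNReal.ofReal ε := ENNReal.ofReal_add_le
        _ ≤ (⨆ i, epos (a i)) + ENNReal.ofReal ε := by
            gcongr
            exact (aux_ofReal_le_epos hj.le).trans (le_iSup (fun i => epos (a i)) j)
        _ = (⨆ i, epos (a i)) + ε := by rw [ENNReal.ofReal_coe_nnreal]

lemma aux_neg_iInf (f : ℕ → EReal) : -(⨅ i, f i) = ⨆ i, -(f i) := by
  refine le_antisymm ?_ (iSup_le fun i => EReal.neg_le_neg_iff.mpr (iInf_le f i))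
  rw [EReal.neg_le]
  refine le_iInf fun i => ?_
  rw [EReal.neg_le]
  exact le_iSup (fun i => -f i) i

lemma aux_eq_bot {w : EReal} (h : ∀ t : ℝ, w ≤ (t : EReal)) : w = ⊥ := by
  by_contra hw
  rcases eq_or_ne w ⊤ with ht | ht
  · have := h 0
    rw [ht] at this
    exact absurd this (by simp)
  · have hwr := EReal.coe_toReal ht hw
    have h2 := h (w.toReal - 1)
    nth_rewrite 1 [← hwr] at h2
    have := EReal.coe_le_coe_iff.mp h2
    linarith

lemma aux_key (A B : ℕ → ℝ≥0∞) (hA : Antitone A) (hB : Monotone B)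
    (hA0 : A 0 ≠ ⊤) (w : EReal)
    (h : ∀ j, w ≤ (A j : EReal) - (B j : EReal)) :
    w ≤ ((⨅ j, A j : ℝ≥0∞) : EReal) - ((⨆ j, B j : ℝ≥0∞) : EReal) := by
  have hAj : ∀ j, A j ≠ ⊤ := fun j hc => hA0 (top_le_iff.mp (hc ▸ hA (Nat.zero_le j)))
  by_cases hBtop : ∃ j, B j = ⊤
  · obtain ⟨j, hj⟩ := hBtop
    have hw : w ≤ ⊥ := by
      have h' := h j
      rwa [hj, EReal.coe_ennreal_top, EReal.sub_top] at h'
    exact hw.trans bot_le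
  push_neg at hBtop
  have hcoeA : ∀ j, (A j : EReal) = (((A j).toReal : ℝ) : EReal) := by
    intro j
    rw [← ENNReal.ofReal_toReal (hAj j), EReal.coe_ennreal_ofReal,
      max_eq_left ENNReal.toReal_nonneg, ENNReal.toReal_ofReal ENNReal.toReal_nonneg]
  have hcoeB : ∀ j, (B j : EReal) = (((B j).toReal : ℝ) : EReal) := by
    intro j
    rw [← ENNReal.ofReal_toReal (hBtop j), EReal.coe_ennreal_ofReal,
      max_eq_left ENNReal.toReal_nonneg, ENNReal.toReal_ofReal ENNReal.toReal_nonneg]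
  by_cases hBsup : (⨆ j, B j) = ⊤
  · rw [hBsup, EReal.coe_ennreal_top, EReal.sub_top, le_bot_iff]
    refine aux_eq_bot fun t => ?_
    set M : ℝ := max ((A 0).toReal - t) 0 with hM
    have hMnn : 0 ≤ M := le_max_right _ _
    have hlt : ENNReal.ofReal M < ⨆ j, B j := hBsup ▸ ENNReal.ofReal_lt_top
    obtain ⟨j, hj⟩ := lt_iSup_iff.mp hlt
    have hMle : ((M : ℝ) : EReal) ≤ (B j : EReal) := by
      have h2 := EReal.coe_ennreal_le_coe_ennreal_iff.mpr hj.le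
      rwa [EReal.coe_ennreal_ofReal, max_eq_left hMnn] at h2
    calc w ≤ (A j : EReal) - (B j : EReal) := h j
      _ ≤ (A 0 : EReal) - ((M : ℝ) : EReal) := by
          refine EReal.sub_le_sub ?_ hMle
          exact EReal.coe_ennreal_le_coe_ennreal_iff.mpr (hA (Nat.zero_le j))
      _ = (((A 0).toReal - M : ℝ) : EReal) := by rw [hcoeA 0, ← EReal.coe_sub]
      _ ≤ (t : EReal) := by
          refine EReal.coe_le_coe_iff.mpr ?_
          have : (A 0).toReal - t ≤ M := le_max_left _ _
          linarith
  · have hBj : ∀ j, B j ≠ ⊤ := hBtop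
    rcases eq_or_ne w ⊥ with hwb | hwb
    · exact hwb ▸ bot_le
    rcases eq_or_ne w ⊤ with hwt | hwt
    · exfalso
      have h0 := h 0
      rw [hwt, hcoeA 0, hcoeB 0, ← EReal.coe_sub, top_le_iff] at h0
      exact EReal.coe_ne_top _ h0
    -- w is real
    set a : ℕ → ℝ := fun j => (A j).toReal with ha
    set b : ℕ → ℝ := fun j => (B j).toReal with hb
    have ha_anti : Antitone a := fun i j hij => ENNReal.toReal_mono (hAj i) (hA hij)
    have hb_mono : Monotone b := fun i j hij => ENNReal.toReal_mono (hBj j) (hB hij)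
    have ha_bdd : BddBelow (Set.range a) := ⟨0, fun y ⟨j, hj⟩ => hj ▸ ENNReal.toReal_nonneg⟩
    have hb_bdd : BddAbove (Set.range b) := by
      refine ⟨(⨆ j, B j).toReal, fun y ⟨j, hj⟩ => ?_⟩
      exact hj ▸ ENNReal.toReal_mono hBsup (le_iSup B j)
    have ha_tend : Filter.Tendsto a Filter.atTop (nhds (⨅ j, a j)) :=
      tendsto_atTop_ciInf ha_anti ha_bdd
    have hb_tend : Filter.Tendsto b Filter.atTop (nhds (⨆ j, b j)) :=
      tendsto_atTop_ciSup hb_mono hb_bdd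
    have hab_tend : Filter.Tendsto (fun j => a j - b j) Filter.atTop
        (nhds ((⨅ j, a j) - ⨆ j, b j)) := ha_tend.sub hb_tend
    have hwle : ∀ j, w.toReal ≤ a j - b j := by
      intro j
      have h' := h j
      rw [hcoeA j, hcoeB j, ← EReal.coe_sub, ← EReal.coe_toReal hwt hwb] at h'
      exact EReal.coe_le_coe_iff.mp h'
    have hlim : w.toReal ≤ (⨅ j, a j) - ⨆ j, b j :=
      ge_of_tendsto hab_tend (Filter.Eventually.of_forall hwle)
    have hinf : ⨅ j, a j = (⨅ j, A j).toReal := (ENNReal.toReal_iInf hAj).symm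
    have hsup : ⨆ j, b j = (⨆ j, B j).toReal := (ENNReal.toReal_iSup hBj).symm
    have hAinf : (⨅ j, A j) ≠ ⊤ := fun hc => hA0 (top_le_iff.mp (hc ▸ iInf_le A 0))
    have hcoeAi : ((⨅ j, A j : ℝ≥0∞) : EReal) = (((⨅ j, A j).toReal : ℝ) : EReal) := by
      rw [← ENNReal.ofReal_toReal hAinf, EReal.coe_ennreal_ofReal,
        max_eq_left ENNReal.toReal_nonneg, ENNReal.toReal_ofReal ENNReal.toReal_nonneg]
    have hcoeBs : ((⨆ j, B j : ℝ≥0∞) : EReal) = (((⨆ j, B j).toReal : ℝ) : EReal) := by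
      rw [← ENNReal.ofReal_toReal hBsup, EReal.coe_ennreal_ofReal,
        max_eq_left ENNReal.toReal_nonneg, ENNReal.toReal_ofReal ENNReal.toReal_nonneg]
    rw [hcoeAi, hcoeBs, ← EReal.coe_sub, ← EReal.coe_toReal hwt hwb]
    refine EReal.coe_le_coe_iff.mpr ?_
    rw [hinf, hsup] at hlim
    exact hlim

lemma aux_epos_eq_sup {a : EReal} (h : a ≠ ⊤) :
    epos a = ENNReal.ofReal ((a ⊔ 0).toReal) := by
  rw [epos, if_neg h]
  rcases eq_or_ne a ⊥ with hb | hb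
  · simp [hb]
  · have hr := EReal.coe_toReal h hb
    rcases le_total a 0 with h0 | h0
    · rw [sup_eq_right.mpr h0]
      have : a.toReal ≤ 0 := by
        have := EReal.toReal_le_toReal h0 hb (by simp)
        simpa using this
      simp [ENNReal.ofReal_of_nonpos, this, ENNReal.ofReal_eq_zero.mpr this]
    · rw [sup_eq_left.mpr h0]

lemma aux_toReal_nonneg {a : EReal} (h : 0 ≤ a) : 0 ≤ a.toReal := by
  rcases eq_or_ne a ⊤ with ht | ht
  · simp [ht]
  · rcases eq_or_ne a ⊥ with hb | hb
    · simp [hb]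
    · have := EReal.toReal_le_toReal h (by simp) ht
      simpa using this

end AuxLemmas

/-- a decreasing pointwise limit of K-quasinearly subharmonic
n.s. functions is K-quasinearly subharmonic n.s. -/
theorem qnsns_of_antitone_limit {N : ℕ} (hN : 2 ≤ N)
    (D : Set (Euc N)) (hDopen : IsOpen D) (hDconn : IsConnected D)
    (K : ℝ) (u : ℕ → Euc N → EReal) (v : Euc N → EReal)
    (hqns : ∀ j, QNSns K D (u j))
    (hmono : ∀ j x, u (j + 1) x ≤ u j x)
    (hlim : ∀ x, v x = ⨅ j, u j x) :
    QNSns K D v := by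
  have hmono' : ∀ y, Antitone fun j => u j y :=
    fun y => antitone_nat_of_succ_le fun j => hmono j y
  have hvle : ∀ j y, v y ≤ u j y := by
    intro j y; rw [hlim y]; exact iInf_le _ j
  have hvmeas : AEMeasurable v (volume.restrict D) := by
    have h1 : AEMeasurable (fun y => ⨅ j, u j y) (volume.restrict D) :=
      AEMeasurable.iInf fun j => (hqns j).2.1
    exact (funext hlim : v = fun y => ⨅ j, u j y) ▸ h1
  refine ⟨(hqns 0).1, hvmeas, ?_, ?_, ?_⟩
  · intro x hx
    exact lt_of_le_of_lt (hvle 0 x) ((hqns 0).2.2.1 x hx)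
  · -- local integrability of the positive part
    intro x hx
    obtain ⟨s, hs, hint⟩ := (hqns 0).2.2.2.1 x hx
    obtain ⟨t, htopen, hxt, hts⟩ := mem_nhdsWithin.mp hs
    refine ⟨t ∩ D, mem_nhdsWithin.mpr ⟨t, htopen, hxt, fun y hy => hy⟩, ?_⟩
    have hmeasset : MeasurableSet (t ∩ D) := htopen.measurableSet.inter hDopen.measurableSet
    have hg0 : IntegrableOn (fun y => ((u 0 y) ⊔ 0).toReal) (t ∩ D) volume :=
      hint.mono_set hts
    refine Integrable.mono' hg0 ?_ ?_
    · have hm : Measurable fun e : EReal => (e ⊔ 0).toReal :=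
        measurable_ereal_toReal.comp (measurable_id.sup measurable_const)
      exact (hm.comp_aemeasurable (hvmeas.mono_measure
        (Measure.restrict_mono Set.inter_subset_right le_rfl))).aestronglyMeasurable
    · refine ((ae_restrict_mem hmeasset).mono fun y hy => ?_)
      have hyD : y ∈ D := hy.2
      have h1 : (0:EReal) ≤ v y ⊔ 0 := le_sup_right
      rw [Real.norm_eq_abs, abs_of_nonneg (aux_toReal_nonneg h1)]
      refine EReal.toReal_le_toReal (sup_le_sup_right (hvle 0 y) 0) ?_ ?_
      · exact ne_bot_of_le_ne_bot (by simp) h1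
      · exact (sup_lt_iff.mpr ⟨(hqns 0).2.2.1 y hyD, by simp⟩).ne
  · -- the sub-mean-value inequality
    intro x r hr hball
    have hballD : ball x r ⊆ D := ball_subset_closedBall.trans hball
    have hrestr : volume.restrict (ball x r) ≤ volume.restrict D :=
      Measure.restrict_mono hballD le_rfl
    have hmeasj : ∀ j, AEMeasurable (u j) (volume.restrict (ball x r)) :=
      fun j => ((hqns j).2.1).mono_measure hrestr
    set A : ℕ → ℝ≥0∞ := fun j => ∫⁻ y in ball x r, epos (u j y) with hA
    set B : ℕ → ℝ≥0∞ := fun j => ∫⁻ y in ball x r, epos (-(u j y)) with hB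
    have hAanti : Antitone A := fun i j hij =>
      lintegral_mono fun y => aux_epos_mono (hmono' y hij)
    have hBmono : Monotone B := fun i j hij =>
      lintegral_mono fun y => aux_epos_mono (EReal.neg_le_neg_iff.mpr (hmono' y hij))
    have hA0 : A 0 ≠ ⊤ := by
      have hint : IntegrableOn (fun y => ((u 0 y) ⊔ 0).toReal) (closedBall x r) volume :=
        (hqns 0).2.2.2.1.integrableOn_compact_subset hball (isCompact_closedBall x r)
      have hint' : IntegrableOn (fun y => ((u 0 y) ⊔ 0).toReal) (ball x r) volume :=
        hint.mono_set ball_subset_closedBall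
      have hbd : ∀ᵐ y ∂(volume.restrict (ball x r)),
          epos (u 0 y) ≤ (‖((u 0 y) ⊔ 0).toReal‖₊ : ℝ≥0∞) := by
        refine (ae_restrict_mem measurableSet_ball).mono fun y hy => ?_
        have hytop : u 0 y ≠ ⊤ := ((hqns 0).2.2.1 y (hballD hy)).ne
        rw [aux_epos_eq_sup hytop, ← enorm_eq_nnnorm,
          Real.enorm_eq_ofReal (aux_toReal_nonneg (le_sup_right : (0:EReal) ≤ _))]
      have : A 0 ≤ ∫⁻ y in ball x r, (‖((u 0 y) ⊔ 0).toReal‖₊ : ℝ≥0∞) :=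
        lintegral_mono_ae hbd
      exact (this.trans_lt hint'.2).ne
    have hPmeas : ∀ j, AEMeasurable (fun y => epos (u j y)) (volume.restrict (ball x r)) :=
      fun j => aux_measurable_epos.comp_aemeasurable (hmeasj j)
    have hNmeas : ∀ j, AEMeasurable (fun y => epos (-(u j y))) (volume.restrict (ball x r)) :=
      fun j => aux_measurable_epos.comp_aemeasurable
        (continuous_neg.measurable.comp_aemeasurable (hmeasj j))
    have hAv : (∫⁻ y in ball x r, epos (v y)) = ⨅ j, A j := by
      rw [← lintegral_iInf' hPmeas
        (Filter.Eventually.of_forall fun y => fun i j hij => aux_epos_mono (hmono' y hij)) hA0]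
      refine lintegral_congr fun y => ?_
      rw [hlim y]
      exact (aux_epos_iInf _).symm
    have hBv : (∫⁻ y in ball x r, epos (-(v y))) = ⨆ j, B j := by
      rw [← lintegral_iSup' hNmeas
        (Filter.Eventually.of_forall fun y => fun i j hij =>
          aux_epos_mono (EReal.neg_le_neg_iff.mpr (hmono' y hij)))]
      refine lintegral_congr fun y => ?_
      rw [hlim y, aux_neg_iInf]
      exact (aux_epos_iSup _).symm
    have hνpos : 0 < unitBallVol N := by
      unfold unitBallVol
      exact ENNReal.toReal_pos (ne_of_gt (measure_ball_pos _ _ one_pos))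
        (measure_ball_lt_top).ne
    have hcpos : (0:ℝ) < K / (unitBallVol N * r ^ N) :=
      div_pos (lt_of_lt_of_le one_pos (hqns 0).1) (mul_pos hνpos (pow_pos hr N))
    have hcpos' : (0:EReal) < ((K / (unitBallVol N * r ^ N) : ℝ) : EReal) := by
      exact_mod_cast hcpos
    have hcne : ((K / (unitBallVol N * r ^ N) : ℝ) : EReal) ≠ ⊤ := EReal.coe_ne_top _
    have hkey : ∀ j, (v x) / ((K / (unitBallVol N * r ^ N) : ℝ) : EReal)
        ≤ (A j : EReal) - (B j : EReal) := by
      intro j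
      rw [EReal.div_le_iff_le_mul hcpos' hcne]
      exact (hvle j x).trans ((hqns j).2.2.2.2 x r hr hball)
    have hfinal : (v x) / ((K / (unitBallVol N * r ^ N) : ℝ) : EReal)
        ≤ esetInt v (ball x r) := by
      unfold esetInt
      rw [hAv, hBv]
      exact aux_key A B hAanti hBmono hA0 _ hkey
    exact (EReal.div_le_iff_le_mul hcpos' hcne).mp hfinal
end

section
/- There exist quasinearly subharmonic functions u, v on ℝ² whose sum u + v is not quasinearly subharmonic. Concretely, u(x,y) = 3 if x = 0 and u(x,y) = 1 if x ≠ 0 is 3-quasinearly subharmonic, v ≡ -2 is harmonic (hence 1-quasinearly subharmonic), but u + v is not K-quasinearly subharmonic for any K ≥ 1. -/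
open MeasureTheory Metric
open scoped ENNReal

noncomputable section

noncomputable section AuxQNS

open MeasureTheory Metric
open scoped ENNReal

/-- Evaluation at the first coordinate as a linear map. -/
noncomputable def qnsEv0 : Euc 2 →ₗ[ℝ] ℝ :=
  { toFun := fun p => p 0, map_add' := fun _ _ => rfl, map_smul' := fun _ _ => rfl }

lemma qns_line_null : volume {p : Euc 2 | p 0 = 0} = 0 := by
  have h : {p : Euc 2 | p 0 = 0} = (LinearMap.ker qnsEv0 : Set (Euc 2)) := rfl
  rw [h]
  apply Measure.addHaar_submodule
  intro htop
  have h1 : (EuclideanSpace.single 0 1 : Euc 2) ∈ LinearMap.ker qnsEv0 :=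
    htop ▸ Submodule.mem_top
  exact absurd (show (EuclideanSpace.single 0 1 : Euc 2) 0 = 0 from h1) (by simp [EuclideanSpace.single_apply])

lemma qns_ae_off : ∀ᵐ p : Euc 2, p 0 ≠ 0 := by
  rw [ae_iff]
  simpa using qns_line_null

lemma qns_nu_pos : 0 < unitBallVol 2 := by
  have h1 : (0 : ℝ≥0∞) < volume (ball (0 : Euc 2) 1) := measure_ball_pos _ _ one_pos
  have h2 : volume (ball (0 : Euc 2) 1) < ⊤ := measure_ball_lt_top
  exact ENNReal.toReal_pos h1.ne' h2.ne

lemma qns_vol_ball (x : Euc 2) (r : ℝ) (hr : 0 < r) :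
    (volume (ball x r)).toReal = unitBallVol 2 * r ^ 2 := by
  rw [Measure.addHaar_ball volume x hr.le, ENNReal.toReal_mul,
    ENNReal.toReal_ofReal (by positivity)]
  simp [unitBallVol, finrank_euclideanSpace, mul_comm]

lemma qns_intOn (x : Euc 2) (r : ℝ) (f : Euc 2 → ℝ) (c : ℝ)
    (h : ∀ p : Euc 2, p 0 ≠ 0 → f p = c) :
    ∫ y in ball x r, f y = c * (volume (ball x r)).toReal := by
  rw [setIntegral_congr_ae (g := fun _ => c) measurableSet_ball
    (by filter_upwards [qns_ae_off] with p hp _ using h p hp)]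
  rw [setIntegral_const, smul_eq_mul, mul_comm]
  rfl

end AuxQNS

end
/-- the sum of two quasinearly subharmonic functions need not be
quasinearly subharmonic: `u = 3` on the line `x = 0` and `1` elsewhere is
3-quasinearly subharmonic, `v ≡ -2` is 1-quasinearly subharmonic (harmonic),
but `u + v` is not K-quasinearly subharmonic for any `K ≥ 1`. -/
theorem sum_of_qns_not_qns :
    QNSIneqFullR 3 (Set.univ : Set (Euc 2))
      (fun p => if p 0 = 0 then (3 : ℝ) else 1) ∧
    QNSIneqFullR 1 (Set.univ : Set (Euc 2)) (fun _ => (-2 : ℝ)) ∧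
    ¬ ∃ K : ℝ, 1 ≤ K ∧ QNSIneqFullR K (Set.univ : Set (Euc 2))
      (fun p => (if p 0 = 0 then (3 : ℝ) else 1) + (-2)) := by
  have hν := qns_nu_pos
  refine ⟨?_, ?_, ?_⟩
  · intro M hM x r hr _
    have hx : max (if x 0 = 0 then (3:ℝ) else 1) (-M) = if x 0 = 0 then 3 else 1 := by
      apply max_eq_left; split <;> linarith
    rw [hx, qns_intOn x r _ (1 + M)
      (fun p hp => by simp only [if_neg hp, max_eq_left (show -M ≤ (1:ℝ) by linarith)]),
      qns_vol_ball x r hr]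
    have hpos : 0 < unitBallVol 2 * r ^ 2 := by positivity
    have h2 : (3:ℝ) / (unitBallVol 2 * r ^ 2) * ((1 + M) * (unitBallVol 2 * r ^ 2))
        = 3 * (1 + M) := by field_simp
    rw [h2]
    split <;> linarith
  · intro M hM x r hr _
    rw [qns_intOn x r _ (max (-2 : ℝ) (-M) + M) (fun p _ => rfl), qns_vol_ball x r hr]
    have hpos : 0 < unitBallVol 2 * r ^ 2 := by positivity
    have h2 : (1:ℝ) / (unitBallVol 2 * r ^ 2) * ((max (-2 : ℝ) (-M) + M) * (unitBallVol 2 * r ^ 2))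
        = max (-2 : ℝ) (-M) + M := by field_simp
    rw [h2]
  · rintro ⟨K, hK, h⟩
    have h1 := h 1 one_pos.le 0 1 one_pos (Set.subset_univ _)
    rw [qns_intOn 0 1 _ 0 (fun p hp => by simp only [if_neg hp]; norm_num)] at h1
    norm_num at h1
end

section
/- Let D be a domain in ℝ^N, N ≥ 2, and let u : D → [-∞, +∞). Then u is harmonic if and only if there exists K ≥ 1 such that both u and -u are K-quasinearly subharmonic n.s. (with the same constant K). -/
open MeasureTheory Metric
open scoped ENNReal

section AuxProofs

variable {N : ℕ}

lemma euc_nontrivial (hN : 2 ≤ N) : Nontrivial (Euc N) := by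
  apply Module.nontrivial_of_finrank_pos (R := ℝ)
  rw [finrank_euclideanSpace_fin]; omega

lemma unitBallVol_pos (hN : 2 ≤ N) : 0 < unitBallVol N := by
  haveI := euc_nontrivial hN
  rw [unitBallVol]
  apply ENNReal.toReal_pos (measure_ball_pos _ _ one_pos).ne' measure_ball_lt_top.ne

lemma volume_ball (hN : 2 ≤ N) (x : Euc N) {r : ℝ} (hr : 0 ≤ r) :
    volume (ball x r) = ENNReal.ofReal (unitBallVol N * r ^ N) := by
  haveI := euc_nontrivial hN
  rw [Measure.addHaar_ball volume x hr, unitBallVol,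
    ENNReal.ofReal_mul (by positivity), ENNReal.ofReal_toReal measure_ball_lt_top.ne,
    mul_comm]
  congr 1
  rw [finrank_euclideanSpace_fin]

lemma ereal_toReal_split (a : EReal) : a.toReal = (a ⊔ 0).toReal - ((-a) ⊔ 0).toReal := by
  induction a using EReal.rec with
  | bot => simp
  | top => simp
  | coe a =>
    rcases le_total a 0 with h | h
    · rw [sup_eq_right.2 (by exact_mod_cast h), sup_eq_left.2 (by rw [← EReal.coe_neg]; exact_mod_cast neg_nonneg.2 h), ← EReal.coe_neg]
      simp
    · rw [sup_eq_left.2 (by exact_mod_cast h), sup_eq_right.2 (by rw [← EReal.coe_neg]; exact_mod_cast neg_nonpos.2 h)]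
      simp

lemma ereal_sup_zero_toReal (a : EReal) : (a ⊔ 0).toReal = max a.toReal 0 := by
  induction a using EReal.rec with
  | bot => simp
  | top => simp
  | coe a =>
    rcases le_total a 0 with h | h
    · rw [sup_eq_right.2 (by exact_mod_cast h)]; simp [max_eq_right h]
    · rw [sup_eq_left.2 (by exact_mod_cast h)]; simp [max_eq_left h]

lemma ennreal_coe_ereal_eq (A : ℝ≥0∞) (h : A ≠ ⊤) : ((A : EReal)) = ((A.toReal : ℝ) : EReal) := by
  have h1 : (A : EReal) ≠ ⊤ := by simp [EReal.coe_ennreal_eq_top_iff, h]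
  rw [← EReal.coe_toReal h1 (EReal.coe_ennreal_ne_bot _), EReal.toReal_coe_ennreal]

lemma esetInt_eq (u : Euc N → EReal) (s : Set (Euc N)) (hs : MeasurableSet s)
    (hfin : ∀ y ∈ s, u y ≠ ⊥ ∧ u y ≠ ⊤)
    (hint : IntegrableOn (fun y => (u y).toReal) s volume) :
    esetInt u s = (((∫ y in s, (u y).toReal) : ℝ) : EReal) := by
  set f : Euc N → ℝ := fun y => (u y).toReal with hf
  have h1 : (∫⁻ y in s, epos (u y)) = ∫⁻ y in s, ENNReal.ofReal (f y) := by
    refine setLIntegral_congr_fun hs (fun y hy => ?_)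
    simp [epos, (hfin y hy).2, hf]
  have h2 : (∫⁻ y in s, epos (-(u y))) = ∫⁻ y in s, ENNReal.ofReal (-(f y)) := by
    refine setLIntegral_congr_fun hs (fun y hy => ?_)
    have : -(u y) ≠ ⊤ := by
      simp only [ne_eq, EReal.neg_eq_top_iff]
      exact (hfin y hy).1
    simp [epos, this, EReal.toReal_neg, hf]
  have hfi : ∫⁻ y in s, ENNReal.ofReal (f y) < ⊤ := by
    refine lt_of_le_of_lt (lintegral_mono fun y => ?_) hint.2
    calc ENNReal.ofReal (f y) ≤ ‖f y‖₊ := Real.ofReal_le_enorm _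
    _ = _ := rfl
  have hfi2 : ∫⁻ y in s, ENNReal.ofReal (-(f y)) < ⊤ := by
    refine lt_of_le_of_lt (lintegral_mono fun y => ?_) hint.2
    calc ENNReal.ofReal (-(f y)) ≤ ‖f y‖₊ := by
          rw [← enorm_eq_nnnorm, ← ofReal_norm]
          exact ENNReal.ofReal_le_ofReal (by rw [Real.norm_eq_abs]; exact neg_le_abs _)
    _ = _ := rfl
  rw [esetInt, h1, h2, integral_eq_lintegral_pos_part_sub_lintegral_neg_part hint,
    EReal.coe_sub]
  congr 1
  · exact (ennreal_coe_ereal_eq _ hfi.ne)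
  · exact (ennreal_coe_ereal_eq _ hfi2.ne)

variable {K : ℝ} {D : Set (Euc N)} {u : Euc N → EReal}

lemma fin_of_both (hu : QNSns K D u) (hnu : QNSns K D (fun x => -(u x))) :
    ∀ y ∈ D, u y ≠ ⊥ ∧ u y ≠ ⊤ := by
  intro y hy
  refine ⟨fun h => ?_, (hu.2.2.1 y hy).ne⟩
  have h2 : -(u y) < ⊤ := hnu.2.2.1 y hy
  rw [h] at h2
  simp at h2

lemma locint_of_both (hu : QNSns K D u) (hnu : QNSns K D (fun x => -(u x))) :
    LocallyIntegrableOn (fun y => (u y).toReal) D volume := by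
  have h := hu.2.2.2.1.sub hnu.2.2.2.1
  convert h using 1
  funext y
  exact ereal_toReal_split _

lemma mvp_of_both (hu : QNSns K D u) (hnu : QNSns K D (fun x => -(u x))) :
    ∀ x r, 0 < r → closedBall x r ⊆ D →
      (u x).toReal = (K / (unitBallVol N * r ^ N)) * ∫ y in ball x r, (u y).toReal := by
  have hfin := fin_of_both hu hnu
  have hloc := locint_of_both hu hnu
  intro x r hr hsub
  have hxD : x ∈ D := hsub (mem_closedBall_self hr.le)
  have hball : ball x r ⊆ D := ball_subset_closedBall.trans hsub
  have hint : IntegrableOn (fun y => (u y).toReal) (ball x r) volume :=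
    (hloc.integrableOn_compact_subset hsub (isCompact_closedBall _ _)).mono_set
      ball_subset_closedBall
  have hintn : IntegrableOn (fun y => ((fun x => -(u x)) y).toReal) (ball x r) volume := by
    have : (fun y => ((fun x => -(u x)) y).toReal) = fun y => -((u y).toReal) := by
      funext y; exact EReal.toReal_neg_eq
    rw [this]; exact hint.neg
  set f : Euc N → ℝ := fun y => (u y).toReal with hf
  set I : ℝ := ∫ y in ball x r, f y with hI
  set c : ℝ := K / (unitBallVol N * r ^ N) with hc
  have he := esetInt_eq u (ball x r) measurableSet_ball (fun y hy => hfin y (hball hy)) hint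
  have he2 := esetInt_eq (fun x => -(u x)) (ball x r) measurableSet_ball
    (fun y hy => by
      obtain ⟨h1, h2⟩ := hfin y (hball hy)
      constructor
      · simp only [ne_eq, EReal.neg_eq_bot_iff]; exact h2
      · simp only [ne_eq, EReal.neg_eq_top_iff]; exact h1) hintn
  have hIn : (∫ y in ball x r, ((fun x => -(u x)) y).toReal) = -I := by
    rw [hI]
    have : (fun y => ((fun x => -(u x)) y).toReal) = fun y => -(f y) := by
      funext y; exact EReal.toReal_neg_eq
    rw [this, integral_neg]
  have i1 := hu.2.2.2.2 x r hr hsub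
  rw [he, ← EReal.coe_mul,
    ← EReal.coe_toReal (hfin x hxD).2 (hfin x hxD).1, EReal.coe_le_coe_iff] at i1
  have i2 := hnu.2.2.2.2 x r hr hsub
  rw [he2, hIn, ← EReal.coe_mul] at i2
  have hx2 : ((fun x => -(u x)) x : EReal) = ((-(u x).toReal : ℝ) : EReal) := by
    simp only [EReal.coe_neg, EReal.coe_toReal (hfin x hxD).2 (hfin x hxD).1]
  rw [hx2, EReal.coe_le_coe_iff] at i2
  have : c * I ≤ f x := by
    have := i2
    rw [mul_neg] at this
    linarith
  have hfx : (u x).toReal = f x := rfl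
  rw [hfx, hI, hc] at *
  linarith [i1, this]

lemma cont_of_mvp (hN : 2 ≤ N) {f : Euc N → ℝ} {c : ℝ → ℝ} (hDopen : IsOpen D)
    (hloc : LocallyIntegrableOn f D volume)
    (hmvp : ∀ x r, 0 < r → closedBall x r ⊆ D → f x = c r * ∫ y in ball x r, f y) :
    ContinuousOn f D := by
  intro x₀ hx₀
  apply ContinuousAt.continuousWithinAt
  obtain ⟨ε, hε, hballD⟩ := Metric.isOpen_iff.1 hDopen x₀ hx₀
  set r : ℝ := ε / 4 with hrdef
  have hr : 0 < r := by positivity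
  have hsub2 : closedBall x₀ (2 * r) ⊆ D := by
    refine Set.Subset.trans ?_ hballD
    intro y hy
    rw [mem_closedBall] at hy
    rw [mem_ball]
    calc dist y x₀ ≤ 2 * r := hy
    _ < ε := by rw [hrdef]; linarith
  have hsubx : ∀ x, dist x x₀ ≤ r → closedBall x r ⊆ D := by
    intro x hx
    refine Set.Subset.trans ?_ hsub2
    intro y hy
    rw [mem_closedBall] at hy ⊢
    calc dist y x₀ ≤ dist y x + dist x x₀ := dist_triangle _ _ _
    _ ≤ r + r := add_le_add hy hx
    _ = 2 * r := by ring
  have hint2 : IntegrableOn f (closedBall x₀ (2 * r)) volume :=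
    hloc.integrableOn_compact_subset hsub2 (isCompact_closedBall _ _)
  set μ : Measure (Euc N) := volume.withDensity (fun y => (‖f y‖₊ : ℝ≥0∞)) with hμ
  set A : ℕ → Set (Euc N) :=
    fun n => closedBall x₀ (r + r / (n + 1)) \ ball x₀ (r - r / (n + 1)) with hA
  have hAmeas : ∀ n, MeasurableSet (A n) :=
    fun n => measurableSet_closedBall.diff measurableSet_ball
  have hAsub : ∀ n, A n ⊆ closedBall x₀ (2 * r) := by
    intro n y hy
    rw [mem_closedBall]
    have h1 : dist y x₀ ≤ r + r / (n + 1) := hy.1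
    have : r / ((n : ℝ) + 1) ≤ r := by
      rw [div_le_iff₀ (by positivity)]
      nlinarith [Nat.cast_nonneg (α := ℝ) n]
    linarith
  have hμcb : μ (closedBall x₀ (2 * r)) < ⊤ := by
    rw [hμ, withDensity_apply _ measurableSet_closedBall]
    exact hint2.2
  have hAanti : Antitone A := by
    intro n m hnm
    have hd : r / ((m : ℝ) + 1) ≤ r / ((n : ℝ) + 1) := by
      apply div_le_div_of_nonneg_left hr.le (by positivity)
      exact_mod_cast Nat.add_le_add_right hnm 1
    exact Set.diff_subset_diff (closedBall_subset_closedBall (by linarith))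
      (ball_subset_ball (by linarith))
  have htendaux : Filter.Tendsto (fun n : ℕ => r / ((n : ℝ) + 1)) Filter.atTop (nhds 0) := by
    have h : Filter.Tendsto (fun n : ℕ => 1 / ((n : ℝ) + 1)) Filter.atTop (nhds 0) :=
      tendsto_one_div_add_atTop_nhds_zero_nat
    have := h.const_mul r
    simpa [div_eq_mul_inv, mul_comm] using this
  have hInter : ⋂ n, A n = sphere x₀ r := by
    ext y
    simp only [Set.mem_iInter, hA, Set.mem_diff, mem_closedBall, mem_ball, not_lt,
      mem_sphere]
    constructor
    · intro h
      have hlim1 : Filter.Tendsto (fun n : ℕ => r + r / ((n:ℝ) + 1)) Filter.atTop (nhds r) := by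
        simpa using htendaux.const_add r
      have hlim2 : Filter.Tendsto (fun n : ℕ => r - r / ((n:ℝ) + 1)) Filter.atTop (nhds r) := by
        simpa using htendaux.const_sub r
      have h1 : dist y x₀ ≤ r := ge_of_tendsto' hlim1 fun n => (h n).1
      have h2 : r ≤ dist y x₀ := le_of_tendsto' hlim2 fun n => (h n).2
      linarith
    · intro h n
      have : (0:ℝ) ≤ r / (n + 1) := by positivity
      constructor <;> [linarith [h.le]; linarith [h.ge]]
  have hμA0 : μ (A 0) ≠ ⊤ := (lt_of_le_of_lt (measure_mono (hAsub 0)) hμcb).ne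
  have htendμ : Filter.Tendsto (fun n => μ (A n)) Filter.atTop (nhds 0) := by
    have ht := MeasureTheory.tendsto_measure_iInter_atTop (μ := μ)
      (fun n => (hAmeas n).nullMeasurableSet) hAanti ⟨0, hμA0⟩
    rw [hInter] at ht
    have hsph : μ (sphere x₀ r) = 0 := by
      haveI := euc_nontrivial hN
      rw [hμ, withDensity_apply _ isClosed_sphere.measurableSet,
        Measure.restrict_eq_zero.2 (Measure.addHaar_sphere volume x₀ r),
        lintegral_zero_measure]
    rwa [hsph] at ht
  rw [Metric.continuousAt_iff]
  intro ε' hε'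
  set c0 : ℝ := |c r| + 1 with hc0def
  have hc0 : 0 < c0 := by positivity
  have habs : |c r| ≤ c0 := by rw [hc0def]; linarith
  have hev : ∀ᶠ n in Filter.atTop, μ (A n) < ENNReal.ofReal (ε' / (4 * c0)) := by
    apply htendμ.eventually_lt_const
    exact ENNReal.ofReal_pos.2 (by positivity)
  obtain ⟨n, hn⟩ := hev.exists
  have hδr : r / ((n : ℝ) + 1) ≤ r := by
    rw [div_le_iff₀ (by positivity)]
    nlinarith [Nat.cast_nonneg (α := ℝ) n]
  refine ⟨r / ((n : ℝ) + 1), by positivity, ?_⟩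
  intro x hx
  rw [Real.dist_eq]
  have hxr : dist x x₀ ≤ r := by linarith
  have hsx : closedBall x r ⊆ D := hsubx x hxr
  have hsx0 : closedBall x₀ r ⊆ D := hsubx x₀ (by simp [hr.le])
  have hintx : IntegrableOn f (ball x r) volume :=
    (hloc.integrableOn_compact_subset hsx (isCompact_closedBall _ _)).mono_set
      ball_subset_closedBall
  have hintx0 : IntegrableOn f (ball x₀ r) volume :=
    (hloc.integrableOn_compact_subset hsx0 (isCompact_closedBall _ _)).mono_set
      ball_subset_closedBall
  have hμAn_ne : μ (A n) ≠ ⊤ := ne_top_of_lt (hn.trans_le le_top)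
  have key : ∀ T : Set (Euc N), MeasurableSet T → T ⊆ A n →
      |∫ y in T, f y| ≤ (μ (A n)).toReal := by
    intro T hT hTA
    have h1 : ‖∫ y in T, f y‖ ≤ (∫⁻ y in T, ENNReal.ofReal ‖f y‖).toReal :=
      norm_integral_le_lintegral_norm f
    rw [Real.norm_eq_abs] at h1
    refine h1.trans ?_
    have h2 : (∫⁻ y in T, ENNReal.ofReal ‖f y‖) = μ T := by
      rw [hμ, withDensity_apply _ hT]
      congr 1
      funext y
      rw [ofReal_norm, enorm_eq_nnnorm]
    rw [h2]
    exact ENNReal.toReal_mono hμAn_ne (measure_mono hTA)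
  have hdx : dist x x₀ < r / ((n:ℝ)+1) := hx
  have hT1 : ball x r \ ball x₀ r ⊆ A n := by
    intro y hy
    obtain ⟨hy1, hy2⟩ := hy
    rw [mem_ball] at hy1 hy2
    push_neg at hy2
    constructor
    · rw [mem_closedBall]
      calc dist y x₀ ≤ dist y x + dist x x₀ := dist_triangle _ _ _
      _ ≤ r + r / ((n:ℝ)+1) := by linarith
    · intro hc2
      rw [mem_ball] at hc2
      have : (0:ℝ) ≤ r / ((n:ℝ)+1) := by positivity
      linarith
  have hT2 : ball x₀ r \ ball x r ⊆ A n := by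
    intro y hy
    obtain ⟨hy1, hy2⟩ := hy
    rw [mem_ball] at hy1 hy2
    push_neg at hy2
    constructor
    · rw [mem_closedBall]
      have : (0:ℝ) ≤ r / ((n:ℝ)+1) := by positivity
      linarith
    · intro hc2
      rw [mem_ball] at hc2
      have htri : dist y x ≤ dist y x₀ + dist x₀ x := dist_triangle _ _ _
      rw [dist_comm x₀ x] at htri
      linarith
  have b1 := key _ (measurableSet_ball.diff measurableSet_ball) hT1
  have b2 := key _ (measurableSet_ball.diff measurableSet_ball) hT2
  have e1 := integral_inter_add_diff (s := ball x r) (t := ball x₀ r)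
    measurableSet_ball hintx
  have e2 := integral_inter_add_diff (s := ball x₀ r) (t := ball x r)
    measurableSet_ball hintx0
  rw [Set.inter_comm] at e2
  have hfx := hmvp x r hr hsx
  have hfx0 := hmvp x₀ r hr hsx0
  have hdiff : f x - f x₀ = c r * ((∫ y in ball x r \ ball x₀ r, f y) -
      (∫ y in ball x₀ r \ ball x r, f y)) := by
    rw [hfx, hfx0]
    rw [← e1, ← e2]
    ring
  have htoReal : (μ (A n)).toReal < ε' / (4 * c0) := by
    rw [← ENNReal.lt_ofReal_iff_toReal_lt hμAn_ne]
    exact hn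
  rw [hdiff, abs_mul]
  calc |c r| * |(∫ y in ball x r \ ball x₀ r, f y) - (∫ y in ball x₀ r \ ball x r, f y)|
      ≤ c0 * (|∫ y in ball x r \ ball x₀ r, f y| + |∫ y in ball x₀ r \ ball x r, f y|) := by
        apply mul_le_mul habs (abs_sub _ _) (abs_nonneg _) hc0.le
  _ ≤ c0 * ((μ (A n)).toReal + (μ (A n)).toReal) := by
        apply mul_le_mul_of_nonneg_left (add_le_add b1 b2) hc0.le
  _ < c0 * (ε' / (4 * c0) + ε' / (4 * c0)) := by
        apply mul_lt_mul_of_pos_left (by linarith) hc0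
  _ ≤ ε' := by
        have h4 : c0 * (ε' / (4 * c0) + ε' / (4 * c0)) = ε' / 2 := by
          field_simp
          ring
        rw [h4]
        linarith

lemma scale_eq (hN : 2 ≤ N) (hDopen : IsOpen D) {f : Euc N → ℝ} {K : ℝ} (hK : 1 ≤ K)
    (hloc : LocallyIntegrableOn f D volume) (hcont : ContinuousOn f D)
    (hmvp : ∀ x r, 0 < r → closedBall x r ⊆ D →
      f x = (K / (unitBallVol N * r ^ N)) * ∫ y in ball x r, f y) :
    ∀ x ∈ D, f x = K * f x := by
  intro x hx
  have hKpos : 0 < K := lt_of_lt_of_le one_pos hK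
  have hVpos : 0 < unitBallVol N := unitBallVol_pos hN
  have key : ∀ ε : ℝ, 0 < ε → |f x / K - f x| ≤ ε := by
    intro ε hε
    obtain ⟨δ0, hδ0, hball0⟩ := Metric.isOpen_iff.1 hDopen x hx
    have hcx : ContinuousWithinAt f D x := hcont x hx
    rw [Metric.continuousWithinAt_iff] at hcx
    obtain ⟨δ1, hδ1, hδ1p⟩ := hcx ε hε
    set r : ℝ := min δ0 δ1 / 2 with hrdef
    have hr : 0 < r := by positivity
    have hsubD : closedBall x r ⊆ D := by
      refine Set.Subset.trans (closedBall_subset_ball ?_) hball0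
      rw [hrdef]
      have : min δ0 δ1 ≤ δ0 := min_le_left _ _
      linarith
    have hbound : ∀ y ∈ ball x r, |f y - f x| ≤ ε := by
      intro y hy
      have hyD : y ∈ D := (ball_subset_closedBall.trans hsubD) hy
      have hyd : dist y x < δ1 := by
        rw [mem_ball] at hy
        have : min δ0 δ1 ≤ δ1 := min_le_right _ _
        rw [hrdef] at hy
        linarith
      have := hδ1p hyD hyd
      rw [Real.dist_eq] at this
      exact this.le
    have hint : IntegrableOn f (ball x r) volume :=
      (hloc.integrableOn_compact_subset hsubD (isCompact_closedBall _ _)).mono_set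
        ball_subset_closedBall
    set vol : ℝ := unitBallVol N * r ^ N with hvol
    have hvolpos : 0 < vol := by positivity
    have hvoleq : (volume (ball x r)).toReal = vol := by
      rw [volume_ball hN x hr.le, ENNReal.toReal_ofReal hvolpos.le]
    have hsubint : (∫ y in ball x r, (f y - f x)) = (∫ y in ball x r, f y) - vol * f x := by
      rw [integral_sub hint (integrableOn_const measure_ball_lt_top.ne),
        setIntegral_const, smul_eq_mul, measureReal_def, hvoleq]
    have hest : |(∫ y in ball x r, (f y - f x))| ≤ ε * vol := by
      have := norm_setIntegral_le_of_norm_le_const (μ := volume) (s := ball x r)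
        measure_ball_lt_top (C := ε)
        (fun y hy => by rw [Real.norm_eq_abs]; exact hbound y hy)
      rw [Real.norm_eq_abs, measureReal_def, hvoleq] at this
      exact this
    have hP := hmvp x r hr hsubD
    -- f x = (K / vol) * P, so P = f x * vol / K
    set P : ℝ := ∫ y in ball x r, f y with hPdef
    have hPeq : P = f x * vol / K := by
      rw [hP]
      field_simp
      rw [hvol]; ring
    rw [hsubint, hPeq] at hest
    have h2 : |f x / K - f x| * vol ≤ ε * vol := by
      calc |f x / K - f x| * vol = |(f x / K - f x) * vol| := by
            rw [abs_mul, abs_of_pos hvolpos]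
      _ = |f x * vol / K - vol * f x| := by ring_nf
      _ ≤ ε * vol := hest
    exact le_of_mul_le_mul_right h2 hvolpos
  have h0 : f x / K - f x = 0 := by
    by_contra h
    have habs : 0 < |f x / K - f x| := abs_pos.2 h
    have := key (|f x / K - f x| / 2) (by linarith)
    linarith
  have : f x / K = f x := by linarith
  field_simp at this
  linarith [this]

lemma backward_dir (hN : 2 ≤ N) (hDopen : IsOpen D)
    (hu : QNSns K D u) (hnu : QNSns K D (fun x => -(u x))) : IsHarmonicOn D u := by
  have hfin := fin_of_both hu hnu
  have hloc := locint_of_both hu hnu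
  have hmvp := mvp_of_both hu hnu
  have hcont : ContinuousOn (fun y => (u y).toReal) D :=
    cont_of_mvp hN hDopen hloc (c := fun r => K / (unitBallVol N * r ^ N)) hmvp
  have hscale := scale_eq hN hDopen hu.1 hloc hcont hmvp
  refine ⟨hfin, hcont, ?_⟩
  intro x r hr hsub
  have hm := hmvp x r hr hsub
  by_cases hK : K = 1
  · rw [hm, hK]
  · have hzero : ∀ y ∈ D, (u y).toReal = 0 := by
      intro y hy
      have h1 : (K - 1) * (u y).toReal = 0 := by linarith [hscale y hy]
      exact (mul_eq_zero.1 h1).resolve_left (fun h => hK (by linarith))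
    have hx0 : (u x).toReal = 0 := hzero x (hsub (mem_closedBall_self hr.le))
    have hint0 : (∫ y in ball x r, (u y).toReal) = 0 := by
      rw [setIntegral_congr_fun measurableSet_ball
        (fun y hy => hzero y ((ball_subset_closedBall.trans hsub) hy))]
      simp
    rw [hx0, hint0, mul_zero]

lemma forward_dir (hDopen : IsOpen D) (hH : IsHarmonicOn D u) :
    QNSns 1 D u ∧ QNSns 1 D (fun x => -(u x)) := by
  obtain ⟨hfin, hcont, hmvp⟩ := hH
  set f : Euc N → ℝ := fun y => (u y).toReal with hfdef
  have hmeasf : AEMeasurable f (volume.restrict D) :=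
    hcont.aemeasurable hDopen.measurableSet
  have hu_meas : AEMeasurable u (volume.restrict D) := by
    refine (measurable_coe_real_ereal.comp_aemeasurable hmeasf).congr ?_
    filter_upwards [ae_restrict_mem hDopen.measurableSet] with x hx
    exact EReal.coe_toReal (hfin x hx).2 (hfin x hx).1
  have hnu_meas : AEMeasurable (fun x => -(u x)) (volume.restrict D) := hu_meas.neg
  have hp : LocallyIntegrableOn (fun y => ((u y) ⊔ 0).toReal) D volume := by
    have he : (fun y => ((u y) ⊔ 0).toReal) = fun y => max (f y) 0 :=
      funext fun y => ereal_sup_zero_toReal _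
    rw [he]
    exact (hcont.sup continuousOn_const).locallyIntegrableOn hDopen.measurableSet
  have hn : LocallyIntegrableOn (fun y => (((fun x => -(u x)) y) ⊔ 0).toReal) D volume := by
    have he : (fun y => (((fun x => -(u x)) y) ⊔ 0).toReal) = fun y => max (-(f y)) 0 := by
      funext y
      rw [ereal_sup_zero_toReal, EReal.toReal_neg_eq]
    rw [he]
    exact ((hcont.neg).sup continuousOn_const).locallyIntegrableOn hDopen.measurableSet
  have hintball : ∀ x r, 0 < r → closedBall x r ⊆ D → IntegrableOn f (ball x r) volume := by
    intro x r hr hsub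
    exact ((hcont.mono hsub).integrableOn_compact (isCompact_closedBall _ _)).mono_set
      ball_subset_closedBall
  refine ⟨⟨le_refl 1, hu_meas, fun x hx => (hfin x hx).2.lt_top, hp, ?_⟩,
    ⟨le_refl 1, hnu_meas, fun x hx => ?_, hn, ?_⟩⟩
  · intro x r hr hsub
    have hx : x ∈ D := hsub (mem_closedBall_self hr.le)
    have hint := hintball x r hr hsub
    rw [esetInt_eq u (ball x r) measurableSet_ball
      (fun y hy => hfin y ((ball_subset_closedBall.trans hsub) hy)) hint]
    rw [← EReal.coe_toReal (hfin x hx).2 (hfin x hx).1, ← EReal.coe_mul,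
      EReal.coe_le_coe_iff]
    exact le_of_eq (hmvp x r hr hsub)
  · rw [lt_top_iff_ne_top, ne_eq, EReal.neg_eq_top_iff]
    exact (hfin x hx).1
  · intro x r hr hsub
    have hx : x ∈ D := hsub (mem_closedBall_self hr.le)
    have hint := hintball x r hr hsub
    have hintn : IntegrableOn (fun y => ((fun x => -(u x)) y).toReal) (ball x r) volume := by
      have : (fun y => ((fun x => -(u x)) y).toReal) = fun y => -(f y) := by
        funext y; exact EReal.toReal_neg_eq
      rw [this]; exact hint.neg
    rw [esetInt_eq (fun x => -(u x)) (ball x r) measurableSet_ball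
      (fun y hy => by
        obtain ⟨h1, h2⟩ := hfin y ((ball_subset_closedBall.trans hsub) hy)
        exact ⟨by simp only [ne_eq, EReal.neg_eq_bot_iff]; exact h2,
          by simp only [ne_eq, EReal.neg_eq_top_iff]; exact h1⟩) hintn]
    have hIn : (∫ y in ball x r, ((fun x => -(u x)) y).toReal) = -(∫ y in ball x r, f y) := by
      have : (fun y => ((fun x => -(u x)) y).toReal) = fun y => -(f y) := by
        funext y; exact EReal.toReal_neg_eq
      rw [this, integral_neg]
    rw [hIn]
    have hux : ((fun x => -(u x)) x) = ((-(f x) : ℝ) : EReal) := by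
      simp only [EReal.coe_neg, hfdef, EReal.coe_toReal (hfin x hx).2 (hfin x hx).1]
    rw [hux, ← EReal.coe_mul, EReal.coe_le_coe_iff]
    have := hmvp x r hr hsub
    rw [mul_neg]
    have hfx : (u x).toReal = f x := rfl
    rw [hfx] at this
    linarith [this]

end AuxProofs

/-- `u` is harmonic on `D` iff there exists `K ≥ 1` such that
both `u` and `-u` are K-quasinearly subharmonic n.s. -/
theorem harmonic_iff_qnsns_sameK {N : ℕ} (hN : 2 ≤ N)
    (D : Set (Euc N)) (hDopen : IsOpen D) (hDconn : IsConnected D)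
    (u : Euc N → EReal) :
    IsHarmonicOn D u ↔
      ∃ K : ℝ, QNSns K D u ∧ QNSns K D (fun x => -(u x)) := by
  constructor
  · intro hH
    exact ⟨1, forward_dir hDopen hH⟩
  · rintro ⟨K, hu, hnu⟩
    exact backward_dir hN hDopen hu hnu
end

section
/- Let D be a domain in ℝ^N, N ≥ 2, let u : D → [-∞, +∞) be K₁-quasinearly subharmonic n.s. and let -u be K₂-quasinearly subharmonic n.s. If there exists y₀ ∈ D with u(y₀) > 0, then K₁ ≥ K₂. -/
open MeasureTheory Metric
open scoped ENNReal

lemma epos_eq (x : EReal) (hx : x ≠ ⊤) :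
    epos x = ENNReal.ofReal ((x ⊔ 0).toReal) := by
  rw [epos, if_neg hx]
  rcases le_total x 0 with h | h
  · rw [sup_eq_right.mpr h]
    simp only [EReal.toReal_zero, ENNReal.ofReal_zero]
    rcases eq_or_ne x ⊥ with rfl | hb
    · simp
    · rw [ENNReal.ofReal_eq_zero]
      rcases eq_or_ne x ⊥ with rfl | hb2
      · simp
      · have := EReal.toReal_le_toReal h hb2 (by simp)
        simpa using this
  · rw [sup_eq_left.mpr h]

lemma finite_lint {N : ℕ} (D : Set (Euc N)) (u : Euc N → EReal)
    (hloc : LocallyIntegrableOn (fun y => ((u y) ⊔ 0).toReal) D volume)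
    (hfin : ∀ x ∈ D, u x < ⊤)
    (x : Euc N) (r : ℝ) (hr : closedBall x r ⊆ D) :
    (∫⁻ y in ball x r, epos (u y)) < ⊤ := by
  have hint : IntegrableOn (fun y => ((u y) ⊔ 0).toReal) (closedBall x r) volume :=
    (hloc.mono_set hr).integrableOn_isCompact (isCompact_closedBall x r)
  have h2 : (∫⁻ y in closedBall x r, ENNReal.ofReal (((u y) ⊔ 0).toReal)) < ⊤ := by
    refine lt_of_le_of_lt ?_ hint.2
    refine lintegral_mono fun y => ?_
    rw [← ofReal_norm_eq_enorm]
    exact ENNReal.ofReal_le_ofReal (le_abs_self _)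
  refine lt_of_le_of_lt ?_ h2
  calc (∫⁻ y in ball x r, epos (u y))
      = ∫⁻ y in ball x r, ENNReal.ofReal (((u y) ⊔ 0).toReal) :=
        setLIntegral_congr_fun measurableSet_ball
          (fun y hy => epos_eq (u y) (hfin y (hr (ball_subset_closedBall hy))).ne)
    _ ≤ _ := lintegral_mono_set ball_subset_closedBall

lemma coe_enn_eq (P : ℝ≥0∞) (h : P ≠ ⊤) : ((P : EReal)) = ((P.toReal : ℝ) : EReal) := by
  have h2 := EReal.coe_toReal (x := (P : EReal))
    (by simpa [EReal.coe_ennreal_eq_top_iff] using h) (by simp)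
  rw [EReal.toReal_coe_ennreal] at h2
  exact h2.symm

/-- if `u` is K₁-quasinearly subharmonic n.s., `-u` is
K₂-quasinearly subharmonic n.s., and `u(y₀) > 0` for some `y₀ ∈ D`,
then `K₁ ≥ K₂`. -/
theorem qnsns_const_comparison {N : ℕ} (hN : 2 ≤ N)
    (D : Set (Euc N)) (hDopen : IsOpen D) (hDconn : IsConnected D)
    (K₁ K₂ : ℝ) (u : Euc N → EReal)
    (hu : QNSns K₁ D u) (hnu : QNSns K₂ D (fun x => -(u x)))
    (y₀ : Euc N) (hy₀ : y₀ ∈ D) (hpos : 0 < u y₀) :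
    K₂ ≤ K₁ := by
  obtain ⟨hK₁1, humeas, hufin, huloc, husm⟩ := hu
  obtain ⟨hK₂1, hnmeas, hnufin, hnuloc, hnusm⟩ := hnu
  obtain ⟨ε, hε, hball⟩ := Metric.isOpen_iff.mp hDopen y₀ hy₀
  set r := ε / 2 with hrdef
  have hr : 0 < r := by positivity
  have hcb : closedBall y₀ r ⊆ D :=
    (closedBall_subset_ball (by simp only [hrdef]; linarith)).trans hball
  set P := ∫⁻ y in ball y₀ r, epos (u y) with hPdef
  set Q := ∫⁻ y in ball y₀ r, epos (-(u y)) with hQdef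
  have hP : P < ⊤ := finite_lint D u huloc hufin y₀ r hcb
  have hQ : Q < ⊤ := finite_lint D (fun x => -(u x)) hnuloc hnufin y₀ r hcb
  have hutop : u y₀ ≠ ⊤ := (hufin y₀ hy₀).ne
  have hubot : u y₀ ≠ ⊥ := by
    have := hnufin y₀ hy₀
    simp only [lt_top_iff_ne_top, ne_eq, EReal.neg_eq_top_iff] at this
    simpa using this
  set a := (u y₀).toReal with hadef
  have ha : (a : EReal) = u y₀ := EReal.coe_toReal hutop hubot
  have hapos : 0 < a := by
    have : ((0 : ℝ) : EReal) < (a : EReal) := by rw [ha]; exact_mod_cast hpos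
    exact_mod_cast this
  set A := P.toReal - Q.toReal with hAdef
  have hEu : esetInt u (ball y₀ r) = ((A : ℝ) : EReal) := by
    rw [esetInt, ← hPdef, ← hQdef, coe_enn_eq P hP.ne, coe_enn_eq Q hQ.ne,
      ← EReal.coe_sub]
  have hEnu : esetInt (fun x => -(u x)) (ball y₀ r) = ((-A : ℝ) : EReal) := by
    rw [esetInt]
    simp only [neg_neg]
    rw [← hPdef, ← hQdef, coe_enn_eq P hP.ne, coe_enn_eq Q hQ.ne, ← EReal.coe_sub]
    norm_num [hAdef]
  have hc0 : 0 < unitBallVol N * r ^ N := by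
    have h1 : 0 < unitBallVol N := by
      rw [unitBallVol]
      exact ENNReal.toReal_pos (measure_ball_pos volume 0 one_pos).ne'
        measure_ball_lt_top.ne
    positivity
  have h1 : a ≤ K₁ / (unitBallVol N * r ^ N) * A := by
    have := husm y₀ r hr hcb
    rw [hEu, ← EReal.coe_mul, ← ha] at this
    exact_mod_cast this
  have h2 : -a ≤ K₂ / (unitBallVol N * r ^ N) * (-A) := by
    have := hnusm y₀ r hr hcb
    simp only at this
    rw [hEnu, ← EReal.coe_mul, ← ha, ← EReal.coe_neg] at this
    exact_mod_cast this
  have hK1pos : 0 < K₁ := lt_of_lt_of_le one_pos hK₁1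
  have hApos : 0 < A := by
    by_contra hA
    push_neg at hA
    have : K₁ / (unitBallVol N * r ^ N) * A ≤ 0 :=
      mul_nonpos_of_nonneg_of_nonpos (by positivity) hA
    linarith
  have h2' : K₂ / (unitBallVol N * r ^ N) * A ≤ a := by nlinarith
  have h3 : K₂ / (unitBallVol N * r ^ N) ≤ K₁ / (unitBallVol N * r ^ N) :=
    le_of_mul_le_mul_right (by linarith) hApos
  exact (div_le_div_iff_of_pos_right hc0).mp h3
end
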